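/- Let 1 ≤ p < ∞ and let λ, ω be positive real numbers with χ(λ) = χ(ω), where χ(t) = 1 if t > 1, 0 if t = 1, and −1 if t < 1. Then the constant-weighted backward shifts λB_p and ωB_p on ℓ^p are topologically conjugate: there exists a homeomorphism h : ℓ^p → ℓ^p with h ∘ (λB_p) = (ωB_p) ∘ h. -/

import Mathlib

open scoped ENNReal

/-- The sign-type function `χ` from the paper. -/
noncomputable def chi (t : ℝ) : ℝ :=
  if t > 1 then 1 else if t = 1 then 0 else -1

open Filter Topology

/-! ### Auxiliary development: a nonlinear "tail-power" homeomorphism of `ℓ^p`. -/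

/-- Tail sums `∑_{k ≥ n} ‖x k‖ ^ q`. -/
noncomputable def tl (q : ℝ) (x : ℕ → ℂ) (n : ℕ) : ℝ := ∑' k : ℕ, ‖x (k + n)‖ ^ q

/-- The nonlinear map, at the level of raw sequences. -/
noncomputable def phiFun (q β : ℝ) (x : ℕ → ℂ) (n : ℕ) : ℂ :=
  x n * (((tl q x n ^ β - tl q x (n + 1) ^ β) / ‖x n‖ ^ q) ^ (1 / q) : ℝ)

section raw
variable {q β : ℝ} {x : ℕ → ℂ}

lemma tl_nonneg (q : ℝ) (x : ℕ → ℂ) (n : ℕ) : 0 ≤ tl q x n :=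
  tsum_nonneg fun _ => Real.rpow_nonneg (norm_nonneg _) _

lemma summable_shift (hx : Summable fun n => ‖x n‖ ^ q) (n : ℕ) :
    Summable fun k => ‖x (k + n)‖ ^ q :=
  (summable_nat_add_iff n).2 hx

lemma tl_succ (hx : Summable fun n => ‖x n‖ ^ q) (n : ℕ) :
    tl q x n = ‖x n‖ ^ q + tl q x (n + 1) := by
  have h := (summable_shift hx n).tsum_eq_zero_add
  simp only [zero_add] at h
  rw [tl, h, tl]
  congr 1
  exact tsum_congr fun k => by ring_nf

lemma tl_succ_le (hx : Summable fun n => ‖x n‖ ^ q) (n : ℕ) :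
    tl q x (n + 1) ≤ tl q x n := by
  rw [tl_succ hx n]
  have := Real.rpow_nonneg (norm_nonneg (x n)) q
  linarith

lemma tl_eq_sub (hx : Summable fun n => ‖x n‖ ^ q) (n : ℕ) :
    tl q x n = (∑' k, ‖x k‖ ^ q) - ∑ i ∈ Finset.range n, ‖x i‖ ^ q := by
  have := hx.sum_add_tsum_nat_add n
  rw [tl]
  linarith

lemma tl_tendsto_zero (hx : Summable fun n => ‖x n‖ ^ q) :
    Tendsto (tl q x) atTop (𝓝 0) := by
  have h1 : Tendsto (fun n => ∑ i ∈ Finset.range n, ‖x i‖ ^ q) atTop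
      (𝓝 (∑' k, ‖x k‖ ^ q)) := hx.hasSum.tendsto_sum_nat
  have := (tendsto_const_nhds (x := ∑' k, ‖x k‖ ^ q) (f := atTop)).sub h1
  rw [sub_self] at this
  refine this.congr fun n => ?_
  rw [tl_eq_sub hx]

lemma rpow_sub_nonneg (hβ : 0 < β) (hx : Summable fun n => ‖x n‖ ^ q) (n : ℕ) :
    0 ≤ tl q x n ^ β - tl q x (n + 1) ^ β :=
  sub_nonneg.2 (Real.rpow_le_rpow (tl_nonneg q x _) (tl_succ_le hx n) hβ.le)

/-- The key norm formula: `‖Φ(x)ₙ‖^q = uₙ^β - uₙ₊₁^β`. -/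
lemma norm_phiFun_rpow (hq : 0 < q) (hβ : 0 < β) (hx : Summable fun n => ‖x n‖ ^ q) (n : ℕ) :
    ‖phiFun q β x n‖ ^ q = tl q x n ^ β - tl q x (n + 1) ^ β := by
  by_cases hxn : x n = 0
  · have hab : tl q x n = tl q x (n + 1) := by
      have := tl_succ hx n
      rw [hxn] at this
      simpa [Real.zero_rpow hq.ne'] using this
    simp [phiFun, hxn, hab, Real.zero_rpow hq.ne']
  · have hd : (0:ℝ) < ‖x n‖ ^ q := Real.rpow_pos_of_pos (norm_pos_iff.2 hxn) q
    have hnum := rpow_sub_nonneg hβ hx n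
    have hr : (0:ℝ) ≤ (tl q x n ^ β - tl q x (n + 1) ^ β) / ‖x n‖ ^ q :=
      div_nonneg hnum hd.le
    rw [phiFun, norm_mul, Complex.norm_real, Real.norm_eq_abs,
      abs_of_nonneg (Real.rpow_nonneg hr _),
      Real.mul_rpow (norm_nonneg _) (Real.rpow_nonneg hr _),
      ← Real.rpow_mul hr, one_div_mul_cancel hq.ne', Real.rpow_one,
      mul_div_cancel₀ _ hd.ne']

/-- Telescoping: the tails of the image. -/
lemma hasSum_tl_phiFun (hq : 0 < q) (hβ : 0 < β) (hx : Summable fun n => ‖x n‖ ^ q) (n : ℕ) :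
    HasSum (fun k => ‖phiFun q β x (k + n)‖ ^ q) (tl q x n ^ β) := by
  have hfun : ∀ k, ‖phiFun q β x (k + n)‖ ^ q
      = tl q x (k + n) ^ β - tl q x (k + n + 1) ^ β := fun k => norm_phiFun_rpow hq hβ hx _
  have hnn : ∀ k, (0:ℝ) ≤ ‖phiFun q β x (k + n)‖ ^ q :=
    fun k => Real.rpow_nonneg (norm_nonneg _) _
  rw [hasSum_iff_tendsto_nat_of_nonneg hnn]
  have hps : ∀ m, ∑ k ∈ Finset.range m, ‖phiFun q β x (k + n)‖ ^ q
      = tl q x n ^ β - tl q x (m + n) ^ β := by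
    intro m
    have := Finset.sum_range_sub' (fun k => tl q x (k + n) ^ β) m
    simp only [zero_add] at this
    rw [← this]
    refine Finset.sum_congr rfl fun k _ => ?_
    rw [hfun k]
    congr 3
    omega
  simp only [hps]
  have h1 : Tendsto (fun m : ℕ => tl q x (m + n)) atTop (𝓝 0) :=
    (tl_tendsto_zero hx).comp (tendsto_add_atTop_nat n)
  have h2 : Tendsto (fun m : ℕ => tl q x (m + n) ^ β) atTop (𝓝 0) := by
    have := h1.rpow_const (Or.inr hβ.le)
    rwa [Real.zero_rpow hβ.ne'] at this
  have := (tendsto_const_nhds (x := tl q x n ^ β) (f := atTop)).sub h2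
  rwa [sub_zero] at this

lemma summable_phiFun (hq : 0 < q) (hβ : 0 < β) (hx : Summable fun n => ‖x n‖ ^ q) :
    Summable fun n => ‖phiFun q β x n‖ ^ q := by
  have := hasSum_tl_phiFun hq hβ hx 0
  simp only [add_zero] at this
  exact this.summable

lemma tl_phiFun (hq : 0 < q) (hβ : 0 < β) (hx : Summable fun n => ‖x n‖ ^ q) (n : ℕ) :
    tl q (phiFun q β x) n = tl q x n ^ β :=
  (hasSum_tl_phiFun hq hβ hx n).tsum_eq

/-- The map with exponent `β⁻¹` inverts the map with exponent `β`. -/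
lemma phiFun_phiFun (hq : 0 < q) (hβ : 0 < β) (hx : Summable fun n => ‖x n‖ ^ q) :
    phiFun q β⁻¹ (phiFun q β x) = x := by
  funext n
  by_cases hxn : x n = 0
  · simp [phiFun, hxn]
  · have hd : (0:ℝ) < ‖x n‖ ^ q := Real.rpow_pos_of_pos (norm_pos_iff.2 hxn) q
    have hlt : tl q x (n + 1) < tl q x n := by
      have := tl_succ hx n; linarith
    have hnum : (0:ℝ) < tl q x n ^ β - tl q x (n + 1) ^ β :=
      sub_pos.2 (Real.rpow_lt_rpow (tl_nonneg q x _) hlt hβ)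
    have hb : ‖x n‖ ^ q = tl q x n - tl q x (n + 1) := by
      have := tl_succ hx n; linarith
    have e1 : ∀ m, tl q (phiFun q β x) m ^ β⁻¹ = tl q x m := by
      intro m
      rw [tl_phiFun hq hβ hx, ← Real.rpow_mul (tl_nonneg q x m), mul_inv_cancel₀ hβ.ne',
        Real.rpow_one]
    conv_lhs => rw [phiFun]
    rw [e1, e1, norm_phiFun_rpow hq hβ hx]
    conv_lhs => rw [phiFun]
    rw [mul_assoc, ← Complex.ofReal_mul,
      ← Real.mul_rpow (div_nonneg hnum.le hd.le) (div_nonneg (by linarith) hnum.le)]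
    have hbb : (0:ℝ) < tl q x n - tl q x (n + 1) := by linarith
    rw [div_mul_div_comm, hb,
      mul_comm (tl q x n - tl q x (n + 1)) (tl q x n ^ β - tl q x (n + 1) ^ β),
      div_self (by positivity), Real.one_rpow, Complex.ofReal_one, mul_one]

end raw

section lplevel
variable {p : ℝ≥0∞} [Fact (1 ≤ p)]

lemma hq_pos (hp : p ≠ ∞) : 0 < p.toReal :=
  ENNReal.toReal_pos (lt_of_lt_of_le one_pos (Fact.out : 1 ≤ p)).ne' hp

lemma lp_summable (hp : p ≠ ∞) (f : lp (fun _ : ℕ => ℂ) p) :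
    Summable fun n => ‖f n‖ ^ p.toReal :=
  (lp.memℓp f).summable (hq_pos hp)

/-- The nonlinear map as a self-map of `ℓ^p`. -/
noncomputable def Phi (hp : p ≠ ∞) {β : ℝ} (hβ : 0 < β) (x : lp (fun _ : ℕ => ℂ) p) :
    lp (fun _ : ℕ => ℂ) p :=
  ⟨phiFun p.toReal β ↑x, memℓp_gen (summable_phiFun (hq_pos hp) hβ (lp_summable hp x))⟩

lemma Phi_coe (hp : p ≠ ∞) {β : ℝ} (hβ : 0 < β) (x : lp (fun _ : ℕ => ℂ) p) :
    (Phi hp hβ x : ℕ → ℂ) = phiFun p.toReal β ↑x := rfl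

lemma Phi_Phi (hp : p ≠ ∞) {β : ℝ} (hβ : 0 < β) (x : lp (fun _ : ℕ => ℂ) p) :
    Phi hp (inv_pos.2 hβ) (Phi hp hβ x) = x := by
  apply lp.ext
  rw [Phi_coe, Phi_coe]
  exact phiFun_phiFun (hq_pos hp) hβ (lp_summable hp x)

/-- Splitting the `q`-th power of the `ℓ^p` norm into a finite part and a tail. -/
lemma norm_rpow_split (hp : p ≠ ∞) (f : lp (fun _ : ℕ => ℂ) p) (N : ℕ) :
    ‖f‖ ^ p.toReal = (∑ i ∈ Finset.range N, ‖f i‖ ^ p.toReal) + tl p.toReal (↑f) N := by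
  rw [lp.norm_rpow_eq_tsum (hq_pos hp) f, tl_eq_sub (lp_summable hp f)]
  ring

/-- The shifted sequence, as an element of `ℓ^p`. -/
noncomputable def shiftLp (hp : p ≠ ∞) (f : lp (fun _ : ℕ => ℂ) p) (N : ℕ) :
    lp (fun _ : ℕ => ℂ) p :=
  ⟨fun k => f (k + N), memℓp_gen (summable_shift (lp_summable hp f) N)⟩

lemma norm_shiftLp (hp : p ≠ ∞) (f : lp (fun _ : ℕ => ℂ) p) (N : ℕ) :
    ‖shiftLp hp f N‖ = tl p.toReal (↑f) N ^ (1 / p.toReal) := by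
  have h : ‖shiftLp hp f N‖ ^ p.toReal = tl p.toReal (↑f) N := by
    rw [lp.norm_rpow_eq_tsum (hq_pos hp), tl]; rfl
  rw [← h, ← Real.rpow_mul (norm_nonneg _), mul_one_div, div_self (hq_pos hp).ne',
    Real.rpow_one]

/-- Minkowski for tails. -/
lemma tl_sub_le (hp : p ≠ ∞) (f g : lp (fun _ : ℕ => ℂ) p) (N : ℕ) :
    tl p.toReal (↑(f - g)) N
      ≤ (tl p.toReal (↑f) N ^ (1 / p.toReal) + tl p.toReal (↑g) N ^ (1 / p.toReal))
        ^ p.toReal := by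
  have h1 : shiftLp hp (f - g) N = shiftLp hp f N - shiftLp hp g N := by
    apply lp.ext
    funext k
    have : (↑(f - g) : ℕ → ℂ) (k + N) = f (k + N) - g (k + N) := by
      rw [lp.coeFn_sub]; rfl
    exact this
  have h2 : ‖shiftLp hp (f - g) N‖ ≤ ‖shiftLp hp f N‖ + ‖shiftLp hp g N‖ := by
    rw [h1]; exact norm_sub_le _ _
  have h3 : tl p.toReal (↑(f - g)) N = ‖shiftLp hp (f - g) N‖ ^ p.toReal := by
    rw [lp.norm_rpow_eq_tsum (hq_pos hp), tl]; rfl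
  rw [h3, ← norm_shiftLp hp f N, ← norm_shiftLp hp g N]
  exact Real.rpow_le_rpow (norm_nonneg _) h2 (hq_pos hp).le

/-- Convergence criterion in `ℓ^p`: coordinatewise convergence plus convergence of all
tail sums implies norm convergence. -/
lemma tendsto_lp_of_tendsto_pointwise_tail (hp : p ≠ ∞)
    {F : ℕ → lp (fun _ : ℕ => ℂ) p} {f : lp (fun _ : ℕ => ℂ) p}
    (hpt : ∀ n, Tendsto (fun m => (F m : ℕ → ℂ) n) atTop (𝓝 ((f : ℕ → ℂ) n)))
    (htail : ∀ N, Tendsto (fun m => tl p.toReal (↑(F m)) N) atTop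
      (𝓝 (tl p.toReal (↑f) N))) :
    Tendsto F atTop (𝓝 f) := by
  set q := p.toReal with hqdef
  have hq : 0 < q := hq_pos hp
  rw [tendsto_iff_norm_sub_tendsto_zero]
  rw [Metric.tendsto_atTop]
  intro ε hε
  -- choose δ
  set δ : ℝ := (ε / 2) ^ q / (1 + 2 ^ q) / 2 with hδdef
  have h2q : (0:ℝ) < 2 ^ q := Real.rpow_pos_of_pos two_pos q
  have hδ : 0 < δ := by positivity
  -- choose N with tl f N < δ
  obtain ⟨N, hN⟩ := (Metric.tendsto_atTop.1 (tl_tendsto_zero (lp_summable hp f)) δ hδ)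
  have hfN : tl q (↑f) N < δ := by
    have := hN N le_rfl
    rwa [Real.dist_eq, sub_zero, abs_of_nonneg (tl_nonneg _ _ _)] at this
  -- eventually the finite part is < δ
  have hfin : Tendsto (fun m => ∑ i ∈ Finset.range N, ‖(F m : ℕ → ℂ) i - f i‖ ^ q)
      atTop (𝓝 0) := by
    have : ∀ i ∈ Finset.range N, Tendsto (fun m => ‖(F m : ℕ → ℂ) i - f i‖ ^ q)
        atTop (𝓝 0) := by
      intro i _
      have h0 : Tendsto (fun m => (F m : ℕ → ℂ) i - f i) atTop (𝓝 0) := by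
        have := (hpt i).sub (tendsto_const_nhds (x := (f : ℕ → ℂ) i))
        rwa [sub_self] at this
      have h1 : Tendsto (fun m => ‖(F m : ℕ → ℂ) i - f i‖) atTop (𝓝 0) := by
        simpa using h0.norm
      have := h1.rpow_const (Or.inr hq.le)
      rwa [Real.zero_rpow hq.ne'] at this
    have := tendsto_finset_sum (Finset.range N) this
    simpa using this
  have hev1 : ∀ᶠ m in atTop, ∑ i ∈ Finset.range N, ‖(F m : ℕ → ℂ) i - f i‖ ^ q < δ :=
    hfin.eventually_lt_const hδ
  have hev2 : ∀ᶠ m in atTop, tl q (↑(F m)) N < δ := (htail N).eventually_lt_const hfN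
  rw [← eventually_atTop]
  filter_upwards [hev1, hev2] with m h1 h2
  have key : ‖F m - f‖ ^ q < δ * (1 + 2 ^ q) := by
    have hsplit := norm_rpow_split hp (F m - f) N
    have hcoe : ∀ i, (↑(F m - f) : ℕ → ℂ) i = (F m : ℕ → ℂ) i - f i := by
      intro i; rw [lp.coeFn_sub]; rfl
    have hfin' : ∑ i ∈ Finset.range N, ‖(↑(F m - f) : ℕ → ℂ) i‖ ^ q < δ := by
      simpa only [hcoe] using h1
    have htail' : tl q (↑(F m - f)) N ≤ δ * 2 ^ q := by
      refine le_trans (tl_sub_le hp (F m) f N) ?_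
      have hb1 : tl q (↑(F m)) N ^ (1 / q) ≤ δ ^ (1 / q) :=
        Real.rpow_le_rpow (tl_nonneg _ _ _) h2.le (by positivity)
      have hb2 : tl q (↑f) N ^ (1 / q) ≤ δ ^ (1 / q) :=
        Real.rpow_le_rpow (tl_nonneg _ _ _) hfN.le (by positivity)
      have hsum : tl q (↑(F m)) N ^ (1 / q) + tl q (↑f) N ^ (1 / q)
          ≤ 2 * δ ^ (1 / q) := by linarith
      have h4 : (tl q (↑(F m)) N ^ (1 / q) + tl q (↑f) N ^ (1 / q)) ^ q
          ≤ (2 * δ ^ (1 / q)) ^ q := by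
        refine Real.rpow_le_rpow
          (add_nonneg (Real.rpow_nonneg (tl_nonneg _ _ _) _)
            (Real.rpow_nonneg (tl_nonneg _ _ _) _)) hsum hq.le
      refine h4.trans ?_
      rw [Real.mul_rpow (by norm_num) (by positivity), ← Real.rpow_mul hδ.le,
        one_div_mul_cancel hq.ne', Real.rpow_one]
      linarith [mul_comm (2 ^ q : ℝ) δ, le_refl (δ * 2 ^ q)]
    calc ‖F m - f‖ ^ q
        = (∑ i ∈ Finset.range N, ‖(↑(F m - f) : ℕ → ℂ) i‖ ^ q) + tl q (↑(F m - f)) N :=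
          hsplit
      _ < δ + δ * 2 ^ q := by linarith
      _ = δ * (1 + 2 ^ q) := by ring
  have hδle : δ * (1 + 2 ^ q) ≤ (ε / 2) ^ q := by
    have h0 : (0:ℝ) < 1 + 2 ^ q := by positivity
    have he : (ε / 2) ^ q / (1 + 2 ^ q) / 2 * (1 + 2 ^ q) = (ε / 2) ^ q / 2 := by
      field_simp
    rw [hδdef, he]
    have : (0:ℝ) ≤ (ε / 2) ^ q := by positivity
    linarith
  have hlt : ‖F m - f‖ ^ q < (ε / 2) ^ q := lt_of_lt_of_le key hδle
  have : ‖F m - f‖ < ε / 2 := by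
    by_contra hcon
    push_neg at hcon
    have := Real.rpow_le_rpow (by positivity) hcon hq.le
    linarith
  rw [Real.dist_eq, sub_zero, abs_of_nonneg (norm_nonneg _)]
  linarith

set_option synthInstance.maxHeartbeats 1000000 in
/-- Continuity of the nonlinear map `Phi`. -/
lemma continuous_Phi (hp : p ≠ ∞) {β : ℝ} (hβ : 0 < β) :
    Continuous (Phi (p := p) hp hβ) := by
  have hq : 0 < p.toReal := hq_pos hp
  set q := p.toReal with hqdef
  have hpne : p ≠ 0 := by
    intro h
    have := hq_pos hp
    rw [h] at this
    simp at this
  rw [continuous_iff_seqContinuous]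
  intro F f hF
  have hnorm0 : Tendsto (fun m => ‖F m - f‖) atTop (𝓝 0) :=
    tendsto_iff_norm_sub_tendsto_zero.1 hF
  have hpt : ∀ n, Tendsto (fun m => (F m : ℕ → ℂ) n) atTop (𝓝 ((f : ℕ → ℂ) n)) := by
    intro n
    have hb : ∀ m, ‖(F m : ℕ → ℂ) n - (f : ℕ → ℂ) n‖ ≤ ‖F m - f‖ := by
      intro m
      have := lp.norm_apply_le_norm hpne (F m - f) n
      rwa [lp.coeFn_sub, Pi.sub_apply] at this
    have h0 : Tendsto (fun m => (F m : ℕ → ℂ) n - (f : ℕ → ℂ) n) atTop (𝓝 0) :=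
      squeeze_zero_norm hb hnorm0
    have := h0.add (tendsto_const_nhds (x := (f : ℕ → ℂ) n))
    simpa using this
  have hnormq : Tendsto (fun m => ‖F m‖ ^ q) atTop (𝓝 (‖f‖ ^ q)) :=
    (hF.norm).rpow_const (Or.inr hq.le)
  have htail : ∀ N, Tendsto (fun m => tl q (↑(F m)) N) atTop (𝓝 (tl q (↑f) N)) := by
    intro N
    have hsum : Tendsto (fun m => ∑ i ∈ Finset.range N, ‖(F m : ℕ → ℂ) i‖ ^ q) atTop
        (𝓝 (∑ i ∈ Finset.range N, ‖(f : ℕ → ℂ) i‖ ^ q)) :=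
      tendsto_finset_sum _ fun i _ => ((hpt i).norm).rpow_const (Or.inr hq.le)
    have hgoal := hnormq.sub hsum
    have e : ∀ g : lp (fun _ : ℕ => ℂ) p,
        ‖g‖ ^ q - (∑ i ∈ Finset.range N, ‖g i‖ ^ q) = tl q (↑g) N := by
      intro g
      rw [norm_rpow_split hp g N]
      ring
    rw [e f] at hgoal
    exact hgoal.congr fun m => e (F m)
  apply tendsto_lp_of_tendsto_pointwise_tail hp
  · -- coordinates of images
    intro n
    simp only [Phi_coe]
    by_cases hxn : (f : ℕ → ℂ) n = 0
    · have he : tl q (↑f) n = tl q (↑f) (n + 1) := by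
        have := tl_succ (lp_summable hp f) n
        rw [hxn] at this
        simpa [← hqdef, Real.zero_rpow hq.ne'] using this
      have hA : Tendsto (fun m => tl q (↑(F m)) n ^ β - tl q (↑(F m)) (n + 1) ^ β)
          atTop (𝓝 0) := by
        have h3 := ((htail n).rpow_const (Or.inr hβ.le)).sub
          ((htail (n + 1)).rpow_const (Or.inr hβ.le))
        rwa [he, sub_self] at h3
      have hnorm : Tendsto (fun m => ‖phiFun q β (↑(F m)) n‖) atTop (𝓝 0) := by
        have h4 := hA.rpow_const (Or.inr (by positivity : (0:ℝ) ≤ 1 / q))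
        rw [Real.zero_rpow (by positivity : (1:ℝ) / q ≠ 0)] at h4
        refine h4.congr fun m => ?_
        rw [← norm_phiFun_rpow hq hβ (lp_summable hp (F m)) n,
          ← Real.rpow_mul (norm_nonneg _), mul_one_div, div_self hq.ne', Real.rpow_one]
      have h5 := tendsto_zero_iff_norm_tendsto_zero.2 hnorm
      have h6 : phiFun q β (↑f) n = 0 := by simp [phiFun, hxn]
      rwa [← h6] at h5
    · have hd : (0:ℝ) < ‖(f : ℕ → ℂ) n‖ ^ q := Real.rpow_pos_of_pos (norm_pos_iff.2 hxn) q
      have hDen : Tendsto (fun m => ‖(F m : ℕ → ℂ) n‖ ^ q) atTop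
          (𝓝 (‖(f : ℕ → ℂ) n‖ ^ q)) := ((hpt n).norm).rpow_const (Or.inr hq.le)
      have hNum : Tendsto (fun m => tl q (↑(F m)) n ^ β - tl q (↑(F m)) (n + 1) ^ β) atTop
          (𝓝 (tl q (↑f) n ^ β - tl q (↑f) (n + 1) ^ β)) :=
        ((htail n).rpow_const (Or.inr hβ.le)).sub
          ((htail (n + 1)).rpow_const (Or.inr hβ.le))
      have hQuot := hNum.div hDen hd.ne'
      have hRpow := hQuot.rpow_const (Or.inr (by positivity : (0:ℝ) ≤ 1 / q))
      have hCast := (Complex.continuous_ofReal.tendsto _).comp hRpow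
      exact (hpt n).mul hCast
  · -- tails of images
    intro N
    have h7 := (htail N).rpow_const (Or.inr hβ.le)
    have e : ∀ g : lp (fun _ : ℕ => ℂ) p,
        tl q (↑(Phi hp hβ g)) N = tl q (↑g) N ^ β := by
      intro g
      rw [Phi_coe]
      exact tl_phiFun hq hβ (lp_summable hp g) N
    rw [← e f] at h7
    exact h7.congr fun m => (e (F m)).symm

lemma Phi_eq_of (hp : p ≠ ∞) {β β' : ℝ} (hβ : 0 < β) (hβ' : 0 < β') (h : β = β') :
    Phi (p := p) hp hβ = Phi hp hβ' := by
  subst h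
  rfl

/-- The nonlinear homeomorphism of `ℓ^p`. -/
noncomputable def PhiHomeo (hp : p ≠ ∞) {β : ℝ} (hβ : 0 < β) :
    lp (fun _ : ℕ => ℂ) p ≃ₜ lp (fun _ : ℕ => ℂ) p where
  toFun := Phi hp hβ
  invFun := Phi hp (inv_pos.2 hβ)
  left_inv := Phi_Phi hp hβ
  right_inv := fun y => by
    have h := Phi_Phi hp (inv_pos.2 hβ) y
    rwa [Phi_eq_of hp (inv_pos.2 (inv_pos.2 hβ)) hβ (inv_inv β)] at h
  continuous_toFun := continuous_Phi hp hβ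
  continuous_invFun := continuous_Phi hp (inv_pos.2 hβ)

end lplevel

/-! ### The exponent from the `χ` condition -/

lemma chi_cases {l w : ℝ} (hchi : chi l = chi w) :
    (1 < l ∧ 1 < w) ∨ (l = 1 ∧ w = 1) ∨ (l < 1 ∧ w < 1) := by
  unfold chi at hchi
  split_ifs at hchi with a b c d
  all_goals (try push_neg at *)
  all_goals
    first
      | (left; exact ⟨by linarith, by linarith⟩)
      | (right; left; exact ⟨by linarith, by linarith⟩)
      | (right; right;
         exact ⟨lt_of_le_of_ne (by linarith) (by assumption),
           lt_of_le_of_ne (by linarith) (by assumption)⟩)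
      | (exfalso; revert hchi; norm_num)

lemma exists_alpha {l w : ℝ} (hl : 0 < l) (hw : 0 < w) (hchi : chi l = chi w) :
    ∃ α : ℝ, 0 < α ∧ l ^ (α : ℝ) = w := by
  have key : ∀ l' w' : ℝ, 0 < l' → 0 < w' → Real.log l' ≠ 0 →
      (0 < Real.log w' / Real.log l' → l' ^ (Real.log w' / Real.log l') = w') := by
    intro l' w' hl' hw' hln _
    rw [Real.rpow_def_of_pos hl', mul_comm, div_mul_cancel₀ _ hln, Real.exp_log hw']
  rcases chi_cases hchi with ⟨h1, h2⟩ | ⟨h1, h2⟩ | ⟨h1, h2⟩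
  · have hll : 0 < Real.log l := Real.log_pos h1
    have hlw : 0 < Real.log w := Real.log_pos h2
    have hpos : 0 < Real.log w / Real.log l := div_pos hlw hll
    exact ⟨_, hpos, key l w hl hw hll.ne' hpos⟩
  · exact ⟨1, one_pos, by rw [h1, Real.one_rpow, h2]⟩
  · have hll : Real.log l < 0 := Real.log_neg hl h1
    have hlw : Real.log w < 0 := Real.log_neg hw h2
    have hpos : 0 < Real.log w / Real.log l := div_pos_of_neg_of_neg hlw hll
    exact ⟨_, hpos, key l w hl hw hll.ne hpos⟩


/-- for positive reals `λ, ω` with `χ(λ) = χ(ω)`, the weighted backward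
shifts `λB_p` and `ωB_p` on `ℓ^p` are topologically conjugate. -/
theorem shifts_conjugate_of_chi_eq (p : ℝ≥0∞) [Fact (1 ≤ p)] (hp : p ≠ ∞)
    (l w : ℝ) (hl : 0 < l) (hw : 0 < w) (hchi : chi l = chi w)
    (Bl Bw : lp (fun _ : ℕ => ℂ) p → lp (fun _ : ℕ => ℂ) p)
    (hBl : ∀ (x : lp (fun _ : ℕ => ℂ) p) (n : ℕ), (Bl x : ℕ → ℂ) n = (l : ℂ) * x (n + 1))
    (hBw : ∀ (x : lp (fun _ : ℕ => ℂ) p) (n : ℕ), (Bw x : ℕ → ℂ) n = (w : ℂ) * x (n + 1)) :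
    ∃ h : lp (fun _ : ℕ => ℂ) p ≃ₜ lp (fun _ : ℕ => ℂ) p,
      ∀ x, h (Bl x) = Bw (h x) := by
  obtain ⟨α, hα, hlα⟩ := exists_alpha hl hw hchi
  have hq : 0 < p.toReal := hq_pos hp
  set q := p.toReal with hqdef
  refine ⟨PhiHomeo hp hα, fun x => ?_⟩
  apply lp.ext
  funext n
  have hcoe : ((PhiHomeo hp hα) (Bl x) : ℕ → ℂ) n = phiFun q α (↑(Bl x)) n := rfl
  have hcoe2 : ((PhiHomeo hp hα) x : ℕ → ℂ) = phiFun q α (↑x) := rfl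
  have hBwn : ((Bw ((PhiHomeo hp hα) x)) : ℕ → ℂ) n = (w : ℂ) * phiFun q α (↑x) (n + 1) := by
    rw [hBw, hcoe2]
  rw [hcoe, hBwn]
  -- tails of `Bl x`
  have htailBl : ∀ m : ℕ, tl q (↑(Bl x)) m = l ^ q * tl q (↑x) (m + 1) := by
    intro m
    rw [tl, tl, ← tsum_mul_left]
    refine tsum_congr fun k => ?_
    rw [hBl x (k + m), norm_mul, Complex.norm_real, Real.norm_eq_abs, abs_of_pos hl,
      Real.mul_rpow hl.le (norm_nonneg _)]
    have : k + m + 1 = k + (m + 1) := by omega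
    rw [this]
  -- the coordinate computation
  rw [phiFun, phiFun, hBl x n, htailBl n, htailBl (n + 1)]
  have hnormlx : ‖(l : ℂ) * (x : ℕ → ℂ) (n + 1)‖ ^ q = l ^ q * ‖(x : ℕ → ℂ) (n + 1)‖ ^ q := by
    rw [norm_mul, Complex.norm_real, Real.norm_eq_abs, abs_of_pos hl,
      Real.mul_rpow hl.le (norm_nonneg _)]
  rw [hnormlx]
  set a := tl q (↑x) (n + 1) with hadef
  set b := tl q (↑x) (n + 1 + 1) with hbdef
  have ha : 0 ≤ a := tl_nonneg _ _ _
  have hb : 0 ≤ b := tl_nonneg _ _ _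
  have hlq : (0:ℝ) < l ^ q := Real.rpow_pos_of_pos hl q
  have e1 : (l ^ q * a) ^ α = (l ^ q) ^ α * a ^ α := Real.mul_rpow hlq.le ha
  have e2 : (l ^ q * b) ^ α = (l ^ q) ^ α * b ^ α := Real.mul_rpow hlq.le hb
  rw [e1, e2, ← mul_sub, mul_div_mul_comm]
  have hba : b ≤ a := tl_succ_le (lp_summable hp x) (n + 1)
  have hnum : 0 ≤ a ^ α - b ^ α := sub_nonneg.2 (Real.rpow_le_rpow hb hba hα.le)
  have hden : (0:ℝ) ≤ ‖(x : ℕ → ℂ) (n + 1)‖ ^ q := Real.rpow_nonneg (norm_nonneg _) _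
  rw [Real.mul_rpow (div_nonneg (Real.rpow_nonneg hlq.le _) hlq.le)
    (div_nonneg hnum hden)]
  have hc1 : ((l ^ q) ^ α / l ^ q) ^ ((1:ℝ) / q) = w / l := by
    rw [← Real.rpow_mul hl.le q α, ← Real.rpow_sub hl, ← Real.rpow_mul hl.le]
    have : (q * α - q) * (1 / q) = α - 1 := by
      field_simp
    rw [this, Real.rpow_sub hl, hlα, Real.rpow_one]
  rw [hc1]
  push_cast
  have hlne : (l : ℂ) ≠ 0 := by
    simpa using hl.ne'
  field_simp
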